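/- If H is a Hamiltonian simple graph of order n ≥ 6 with minimum degree δ(H) ≥ 3, then the diameter of H is at most ⌊n/2⌋ − 1. -/

import Mathlib

/-- Number of edges of a simple graph. -/
noncomputable def numEdges {V : Type*} (G : SimpleGraph V) : ℕ := Nat.card G.edgeSet

/-- Every edge of `G` lies in a triangle. -/
def EveryEdgeInTriangle {V : Type*} (G : SimpleGraph V) : Prop :=
  ∀ ⦃u v : V⦄, G.Adj u v → ∃ w, G.Adj u w ∧ G.Adj v w

/-- `G` is 2-connected: it has at least 3 vertices and deleting any single vertex
leaves a connected graph. -/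
def TwoConnected {V : Type*} (G : SimpleGraph V) : Prop :=
  3 ≤ Nat.card V ∧ ∀ v : V, (G.induce ({v}ᶜ : Set V)).Connected

/-- `G` is 3-connected: it has at least 4 vertices and deleting any set of at most 2
vertices leaves a connected graph. -/
def ThreeConnected {V : Type*} (G : SimpleGraph V) : Prop :=
  4 ≤ Nat.card V ∧ ∀ S : Set V, S.ncard ≤ 2 → (G.induce (Sᶜ : Set V)).Connected

/-- `G` is edge-pancyclic: every edge lies in a cycle of each length `k` with `3 ≤ k ≤ |V|`. -/
def EdgePancyclic {V : Type*} (G : SimpleGraph V) : Prop :=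
  ∀ k : ℕ, 3 ≤ k → k ≤ Nat.card V → ∀ ⦃u v : V⦄, G.Adj u v →
    ∃ c : G.Walk u u, c.IsCycle ∧ c.length = k ∧ s(u, v) ∈ c.edges

/-- Base relation for the graph `A_n` (`n = 2q`): vertices `inl i` are the cycle
vertices `vᵢ`, vertices `inr i` are the added vertices `uᵢ`; `vᵢ ~ vᵢ₊₁`,
`uᵢ ~ vᵢ` and `uᵢ ~ vᵢ₊₁`. -/
def ARel (q : ℕ) : (ZMod q ⊕ ZMod q) → (ZMod q ⊕ ZMod q) → Prop :=
  fun x y => match x, y with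
    | Sum.inl a, Sum.inl b => a = b + 1
    | Sum.inr a, Sum.inl b => b = a ∨ b = a + 1
    | _, _ => False

/-- The graph `A_n` where `n = 2q`. -/
def graphA (q : ℕ) : SimpleGraph (ZMod q ⊕ ZMod q) := SimpleGraph.fromRel (ARel q)

/-- The graph `F_n` where `n = 2q + 1`: `A_{n-1}` plus a new vertex (`none`)
adjacent to `v₁` and `v₂`. -/
def graphF (q : ℕ) : SimpleGraph (Option (ZMod q ⊕ ZMod q)) :=
  SimpleGraph.fromRel (fun x y => match x, y with
    | some a, some b => ARel q a b
    | none, some w => w = Sum.inl 1 ∨ w = Sum.inl 2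
    | _, _ => False)

/-- The graph `G_n` where `n = 2q + 1`: `A_{n-1}` plus a new vertex (`none`)
adjacent to `u₁` and `v₁`. -/
def graphG (q : ℕ) : SimpleGraph (Option (ZMod q ⊕ ZMod q)) :=
  SimpleGraph.fromRel (fun x y => match x, y with
    | some a, some b => ARel q a b
    | none, some w => w = Sum.inr 1 ∨ w = Sum.inl 1
    | _, _ => False)

/-- The graph `H_n` where `n = 2q + 1`: `A_{n-1}` with the edge `v₁v₂` subdivided by a
new vertex (`none`), which is moreover joined to `u₁`. -/
def graphH (q : ℕ) : SimpleGraph (Option (ZMod q ⊕ ZMod q)) :=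
  SimpleGraph.fromRel (fun x y => match x, y with
    | some (Sum.inl a), some (Sum.inl b) =>
        a = b + 1 ∧ ¬(a = 2 ∧ b = 1) ∧ ¬(a = 1 ∧ b = 2)
    | some a, some b => ARel q a b
    | none, some w => w = Sum.inl 1 ∨ w = Sum.inl 2 ∨ w = Sum.inr 1
    | _, _ => False)

/-- The wheel graph of order `n`: the hub `none` joined to every vertex of the
cycle `C_{n-1}` on `ZMod (n-1)`. -/
def wheelGraph (n : ℕ) : SimpleGraph (Option (ZMod (n - 1))) :=
  SimpleGraph.fromRel (fun x y => match x, y with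
    | some a, some b => a = b + 1
    | none, some _ => True
    | _, _ => False)
section Stmt13Aux

open SimpleGraph

variable {V : Type*}

private lemma getVert_eq_support_getElem {G : SimpleGraph V} {u v : V} (p : G.Walk u v) :
    ∀ (i : ℕ) (h : i < p.support.length), p.getVert i = p.support[i] := by
  induction p with
  | nil =>
    intro i h
    simp only [SimpleGraph.Walk.support_nil, List.length_cons, List.length_nil] at h
    have : i = 0 := by omega
    subst this
    simp
  | cons hadj q ih =>
    intro i h
    cases i with
    | zero => simp [SimpleGraph.Walk.getVert_zero]
    | succ i =>
      simp only [SimpleGraph.Walk.support_cons, List.length_cons] at h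
      simp only [SimpleGraph.Walk.getVert_cons_succ, SimpleGraph.Walk.support_cons]
      rw [ih i (by omega)]
      simp

/-- A "good" cyclic enumeration of the vertices of `H`. -/
private def GoodEnum (H : SimpleGraph V) (n : ℕ) (f : ℕ → V) : Prop :=
  (∀ k, H.Adj (f k) (f (k + 1))) ∧ (∀ k, f (k + n) = f k) ∧
    (∀ i j, i < n → j < n → f i = f j → i = j) ∧ (∀ v, ∃ k, k < n ∧ f k = v)

private lemma goodEnum_mod {n : ℕ} {f : ℕ → V} (hn : 0 < n)
    (hper : ∀ k, f (k + n) = f k) : ∀ a, f a = f (a % n) := by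
  intro a
  induction a using Nat.strong_induction_on with
  | _ a ih =>
    rcases lt_or_ge a n with h | h
    · rw [Nat.mod_eq_of_lt h]
    · have h1 : a - n + n = a := by omega
      have h2 := hper (a - n)
      rw [h1] at h2
      rw [h2, ih (a - n) (by omega), Nat.mod_eq_sub_mod h]

private lemma goodEnum_shift {H : SimpleGraph V} {n : ℕ} {f : ℕ → V} (hn : 0 < n)
    (hg : GoodEnum H n f) (i : ℕ) : GoodEnum H n (fun k => f (i + k)) := by
  obtain ⟨hadj, hper, hinj, hsurj⟩ := hg
  have hmod := goodEnum_mod hn hper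
  refine ⟨fun k => hadj (i + k), fun k => ?_, fun a b ha hb hab => ?_, fun v => ?_⟩
  · show f (i + (k + n)) = f (i + k)
    rw [← Nat.add_assoc]; exact hper (i + k)
  · simp only at hab
    rw [hmod (i + a), hmod (i + b)] at hab
    have h1 := hinj _ _ (Nat.mod_lt _ hn) (Nat.mod_lt _ hn) hab
    have h2 : a % n = b % n := Nat.ModEq.add_left_cancel' i h1
    rwa [Nat.mod_eq_of_lt ha, Nat.mod_eq_of_lt hb] at h2
  · obtain ⟨j, hj, hfj⟩ := hsurj v
    refine ⟨(j + n - i % n) % n, Nat.mod_lt _ hn, ?_⟩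
    show f (i + (j + n - i % n) % n) = v
    have e1 : i + (j + n - i % n) % n ≡ i + (j + n - i % n) [MOD n] :=
      Nat.ModEq.add_left i (Nat.mod_modEq _ n)
    obtain ⟨Q, hQ⟩ : ∃ Q, n * (i / n) = Q := ⟨_, rfl⟩
    have hqr : i % n + Q = i := by rw [← hQ]; exact Nat.mod_add_div i n
    have hrlt : i % n < n := Nat.mod_lt _ hn
    have e2 : i + (j + n - i % n) = n * (i / n) + (j + n) := by
      rw [hQ]; omega
    have e3 : (i + (j + n - i % n) % n) % n = j := by
      rw [e1, e2, Nat.mul_add_mod, Nat.add_mod_right, Nat.mod_eq_of_lt hj]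
    rw [hmod, e3, hfj]

private lemma goodEnum_rev {H : SimpleGraph V} {n : ℕ} {f : ℕ → V} (hn : 2 ≤ n)
    (hg : GoodEnum H n f) : GoodEnum H n (fun k => f ((n - k % n) % n)) := by
  obtain ⟨hadj, hper, hinj, hsurj⟩ := hg
  have hn0 : 0 < n := by omega
  have hf0 : f n = f 0 := by have := hper 0; rwa [Nat.zero_add] at this
  refine ⟨fun k => ?_, fun k => by simp [Nat.add_mod_right], fun a b ha hb hab => ?_,
    fun v => ?_⟩
  · show H.Adj (f ((n - k % n) % n)) (f ((n - (k + 1) % n) % n))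
    have hr : k % n < n := Nat.mod_lt _ hn0
    by_cases h : k % n + 1 < n
    · have hsucc : (k + 1) % n = k % n + 1 := by
        rw [Nat.add_mod, Nat.mod_eq_of_lt (show 1 < n by omega),
          Nat.mod_eq_of_lt h]
      rw [hsucc]
      rcases Nat.eq_zero_or_pos (k % n) with h0 | h0
      · rw [h0]
        have e1 : (n - 0) % n = 0 := by simp
        have e2 : (n - (0 + 1)) % n = n - 1 := Nat.mod_eq_of_lt (by omega)
        rw [e1, e2]
        have := hadj (n - 1)
        rw [show n - 1 + 1 = n by omega, hf0] at this
        exact this.symm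
      · have e1 : (n - k % n) % n = n - k % n := Nat.mod_eq_of_lt (by omega)
        have e2 : (n - (k % n + 1)) % n = n - k % n - 1 := by
          rw [Nat.mod_eq_of_lt (by omega)]; omega
        rw [e1, e2]
        have := hadj (n - k % n - 1)
        rw [show n - k % n - 1 + 1 = n - k % n by omega] at this
        exact this.symm
    · have h2 : k % n = n - 1 := by omega
      have hsucc : (k + 1) % n = 0 := by
        rw [Nat.add_mod, Nat.mod_eq_of_lt (show 1 < n by omega), h2,
          show n - 1 + 1 = n by omega, Nat.mod_self]
      rw [hsucc, h2, show n - (n - 1) = 1 by omega,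
        Nat.mod_eq_of_lt (show 1 < n by omega), show (n - 0) % n = 0 by simp]
      exact (hadj 0).symm
  · simp only at hab
    rw [Nat.mod_eq_of_lt ha, Nat.mod_eq_of_lt hb] at hab
    have h1 := hinj _ _ (Nat.mod_lt _ hn0) (Nat.mod_lt _ hn0) hab
    rcases Nat.eq_zero_or_pos a with h0a | h0a <;> rcases Nat.eq_zero_or_pos b with h0b | h0b
    · omega
    · rw [h0a, Nat.sub_zero, Nat.mod_self, Nat.mod_eq_of_lt (show n - b < n by omega)] at h1
      omega
    · rw [h0b, Nat.sub_zero, Nat.mod_self, Nat.mod_eq_of_lt (show n - a < n by omega)] at h1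
      omega
    · rw [Nat.mod_eq_of_lt (show n - a < n by omega),
        Nat.mod_eq_of_lt (show n - b < n by omega)] at h1
      omega
  · obtain ⟨j, hj, hfj⟩ := hsurj v
    refine ⟨(n - j) % n, Nat.mod_lt _ hn0, ?_⟩
    show f ((n - (n - j) % n % n) % n) = v
    rcases Nat.eq_zero_or_pos j with h0 | h0
    · subst h0
      simpa using hfj
    · have e1 : (n - j) % n = n - j := Nat.mod_eq_of_lt (by omega)
      rw [e1, Nat.mod_eq_of_lt (by omega : n - j < n), show n - (n - j) = j by omega,
        Nat.mod_eq_of_lt hj, hfj]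

private lemma stmt13_key {V : Type*} [Fintype V] [DecidableEq V] (H : SimpleGraph V)
    [DecidableRel H.Adj] (hδ : 3 ≤ H.minDegree) (n : ℕ) (hn : 6 ≤ n) {f : ℕ → V}
    (hg : GoodEnum H n f) (t : ℕ) (ht : t ≤ n / 2) :
    H.edist (f 0) (f t) ≤ ((n / 2 - 1 : ℕ) : ℕ∞) := by
  obtain ⟨hadj, hper, hinj, hsurj⟩ := hg
  have hn0 : 0 < n := by omega
  have hf0 : f n = f 0 := by have := hper 0; rwa [Nat.zero_add] at this
  -- walks along the cycle
  have hwalk : ∀ i k : ℕ, ∃ q : H.Walk (f i) (f (i + k)), q.length = k := by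
    intro i k
    induction k with
    | zero => exact ⟨SimpleGraph.Walk.nil, rfl⟩
    | succ k ih =>
      obtain ⟨q, hq⟩ := ih
      exact ⟨q.concat (hadj (i + k)), by simp [hq]⟩
  have hD : ∀ i j : ℕ, i ≤ j → H.edist (f i) (f j) ≤ ((j - i : ℕ) : ℕ∞) := by
    intro i j hij
    obtain ⟨q, hq⟩ := hwalk i (j - i)
    have hq' := (q.copy rfl (congrArg f (show i + (j - i) = j by omega))).edist_le
    rwa [SimpleGraph.Walk.length_copy, hq] at hq'
  have hE : ∀ i j : ℕ, H.Adj (f i) (f j) → H.edist (f i) (f j) ≤ 1 := by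
    intro i j h
    exact le_of_eq (SimpleGraph.edist_eq_one_iff_adj.mpr h)
  -- chords
  have hchord : ∀ i : ℕ, ∃ s, s < n ∧ H.Adj (f i) (f s) ∧ f s ≠ f (i + 1) ∧
      f s ≠ f (i + n - 1) := by
    intro i
    have h1 : f (i + 1) ∈ H.neighborFinset (f i) := (H.mem_neighborFinset _ _).mpr (hadj i)
    have h2 : f (i + n - 1) ∈ H.neighborFinset (f i) := by
      refine (H.mem_neighborFinset _ _).mpr ?_
      have := hadj (i + n - 1)
      rw [show i + n - 1 + 1 = i + n by omega, hper i] at this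
      exact this.symm
    have hdeg : 3 ≤ (H.neighborFinset (f i)).card :=
      le_trans hδ (H.minDegree_le_degree (f i))
    by_contra hcon
    push_neg at hcon
    have hsub : H.neighborFinset (f i) ⊆ {f (i + 1), f (i + n - 1)} := by
      intro w hw
      simp only [Finset.mem_insert, Finset.mem_singleton]
      obtain ⟨s, hs, rfl⟩ := hsurj w
      have hadjw := (H.mem_neighborFinset _ _).mp hw
      rcases eq_or_ne (f s) (f (i + 1)) with h | h
      · exact Or.inl h
      · exact Or.inr (hcon s hs hadjw h)
    have hle := Finset.card_le_card hsub
    have : ({f (i + 1), f (i + n - 1)} : Finset V).card ≤ 2 :=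
      le_trans (Finset.card_insert_le _ _) (by simp)
    omega
  -- main case split
  by_cases ht1 : t ≤ n / 2 - 1
  · refine le_trans (hD 0 t (by omega)) (Nat.cast_le.mpr (by omega))
  have htm : t = n / 2 := by omega
  have hm3 : 3 ≤ n / 2 := by omega
  -- chord at f 0
  obtain ⟨s, hs, hadjs, hne1, hne2⟩ := hchord 0
  rw [Nat.zero_add] at hne1
  rw [show (0 : ℕ) + n - 1 = n - 1 by omega] at hne2
  have hs0 : s ≠ 0 := by rintro rfl; exact hadjs.ne rfl
  have hs1 : s ≠ 1 := fun h => hne1 (by rw [h])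
  have hsn1 : s ≠ n - 1 := fun h => hne2 (by rw [h])
  have hs2 : 2 ≤ s ∧ s ≤ n - 2 := by omega
  by_cases hsm : s ≤ n / 2
  · -- path: f 0 ~ f s, then along cycle to f t
    calc H.edist (f 0) (f t) ≤ H.edist (f 0) (f s) + H.edist (f s) (f t) :=
          SimpleGraph.edist_triangle
      _ ≤ 1 + ((t - s : ℕ) : ℕ∞) := add_le_add (hE 0 s hadjs) (hD s t (by omega))
      _ = ((1 + (t - s) : ℕ) : ℕ∞) := by push_cast; ring
      _ ≤ ((n / 2 - 1 : ℕ) : ℕ∞) := Nat.cast_le.mpr (by omega)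
  by_cases hgood : s ≤ n / 2 * 2 - 2
  · -- path: f 0 ~ f s, then backwards along cycle to f t
    calc H.edist (f 0) (f t) ≤ H.edist (f 0) (f s) + H.edist (f s) (f t) :=
          SimpleGraph.edist_triangle
      _ ≤ 1 + ((s - t : ℕ) : ℕ∞) := by
          refine add_le_add (hE 0 s hadjs) ?_
          rw [SimpleGraph.edist_comm]
          exact hD t s (by omega)
      _ = ((1 + (s - t) : ℕ) : ℕ∞) := by push_cast; ring
      _ ≤ ((n / 2 - 1 : ℕ) : ℕ∞) := Nat.cast_le.mpr (by omega)
  -- now n is odd and s = n - 2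
  have hodd : n % 2 = 1 ∧ s = n - 2 := by omega
  -- chord at f t
  obtain ⟨s', hs', hadjs', hne1', hne2'⟩ := hchord t
  have hs'0 : s' ≠ t := fun h => hadjs'.ne' (by rw [h])
  have hs'1 : s' ≠ t + 1 := fun h => hne1' (by rw [h])
  have hs'2 : s' ≠ t - 1 := by
    intro h
    apply hne2'
    rw [h]
    have := hper (t - 1)
    rw [show t - 1 + n = t + n - 1 by omega] at this
    exact this.symm
  rcases lt_or_ge s' t with hlt | hge
  · -- s' ≤ t - 2 : path f 0 → f s' ~ f t
    calc H.edist (f 0) (f t) ≤ H.edist (f 0) (f s') + H.edist (f s') (f t) :=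
          SimpleGraph.edist_triangle
      _ ≤ ((s' - 0 : ℕ) : ℕ∞) + 1 := by
          refine add_le_add (hD 0 s' (by omega)) ?_
          rw [SimpleGraph.edist_comm]
          exact hE t s' hadjs'
      _ = (((s' - 0) + 1 : ℕ) : ℕ∞) := by push_cast; ring
      _ ≤ ((n / 2 - 1 : ℕ) : ℕ∞) := Nat.cast_le.mpr (by omega)
  rcases eq_or_ne s' (n - 1) with hlast | hmid
  · -- f 0 ~ f (n-1) ~ f t
    have hadj01 : H.Adj (f 0) (f (n - 1)) := by
      have := hadj (n - 1)
      rw [show n - 1 + 1 = n by omega, hf0] at this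
      exact this.symm
    calc H.edist (f 0) (f t) ≤ H.edist (f 0) (f (n - 1)) + H.edist (f (n - 1)) (f t) :=
          SimpleGraph.edist_triangle
      _ ≤ 1 + 1 := by
          refine add_le_add (hE 0 (n - 1) hadj01) ?_
          rw [SimpleGraph.edist_comm, ← hlast]
          exact hE t s' hadjs'
      _ ≤ ((n / 2 - 1 : ℕ) : ℕ∞) := by
          rw [show (1 + 1 : ℕ∞) = ((2 : ℕ) : ℕ∞) by rfl]
          exact Nat.cast_le.mpr (by omega)
  · -- t + 2 ≤ s' ≤ n - 2 : path f 0 ~ f s → f s' ~ f t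
    have hrange : t + 2 ≤ s' ∧ s' ≤ n - 2 := by omega
    calc H.edist (f 0) (f t) ≤ H.edist (f 0) (f s') + H.edist (f s') (f t) :=
          SimpleGraph.edist_triangle
      _ ≤ (H.edist (f 0) (f s) + H.edist (f s) (f s')) + H.edist (f s') (f t) :=
          add_le_add_left SimpleGraph.edist_triangle _
      _ ≤ (1 + ((s - s' : ℕ) : ℕ∞)) + 1 := by
          refine add_le_add (add_le_add (hE 0 s hadjs) ?_) ?_
          · rw [SimpleGraph.edist_comm]
            exact hD s' s (by omega)
          · rw [SimpleGraph.edist_comm]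
            exact hE t s' hadjs'
      _ = ((1 + (s - s') + 1 : ℕ) : ℕ∞) := by push_cast; ring
      _ ≤ ((n / 2 - 1 : ℕ) : ℕ∞) := Nat.cast_le.mpr (by omega)

end Stmt13Aux

/-- A Hamiltonian graph of order `n ≥ 6` with minimum degree at least 3
has diameter at most `⌊n/2⌋ - 1`. -/
theorem stmt_13 {V : Type*} [Fintype V] [DecidableEq V] (H : SimpleGraph V) [DecidableRel H.Adj]
    (hn : 6 ≤ Fintype.card V) (hham : H.IsHamiltonian) (hδ : 3 ≤ H.minDegree) :
    H.diam ≤ Fintype.card V / 2 - 1 := by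
  classical
  set n := Fintype.card V with hndef
  have hn0 : 0 < n := by omega
  obtain ⟨a, p, hp⟩ := hham (by omega)
  have hplen : p.length = n := hp.length_eq
  set f : ℕ → V := fun k => p.getVert (k % n) with hf
  have hfval : ∀ k, k < n → f k = p.getVert k := by
    intro k hk; simp only [hf, Nat.mod_eq_of_lt hk]
  have hgva : p.getVert n = a := by rw [← hplen]; exact p.getVert_length
  -- the four good-enumeration properties
  have hadj : ∀ k, H.Adj (f k) (f (k + 1)) := by
    intro k
    have hr : k % n < n := Nat.mod_lt _ hn0
    by_cases h : k % n + 1 < n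
    · have hsucc : (k + 1) % n = k % n + 1 := by
        rw [Nat.add_mod, Nat.mod_eq_of_lt (show 1 < n by omega), Nat.mod_eq_of_lt h]
      show H.Adj (p.getVert (k % n)) (p.getVert ((k + 1) % n))
      rw [hsucc]
      exact p.adj_getVert_succ (by omega)
    · have h2 : k % n = n - 1 := by omega
      have hsucc : (k + 1) % n = 0 := by
        rw [Nat.add_mod, Nat.mod_eq_of_lt (show 1 < n by omega), h2,
          show n - 1 + 1 = n by omega, Nat.mod_self]
      show H.Adj (p.getVert (k % n)) (p.getVert ((k + 1) % n))
      have h3 : p.getVert 0 = p.getVert n := by rw [p.getVert_zero, hgva]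
      rw [hsucc, h2, h3]
      have := p.adj_getVert_succ (i := n - 1) (by omega)
      rwa [show n - 1 + 1 = n by omega] at this
  have hper : ∀ k, f (k + n) = f k := by
    intro k; simp only [hf, Nat.add_mod_right]
  have hsuplen : p.support.length = n + 1 := by
    rw [SimpleGraph.Walk.length_support, hplen]
  have htailnd : p.support.tail.Nodup := hp.isCycle.support_nodup
  have htaillen : p.support.tail.length = n := by
    rw [List.length_tail, hsuplen]; omega
  have hgetElem : ∀ i (h : i < n + 1), p.getVert i = p.support[i]'(by omega) := by
    intro i h; exact getVert_eq_support_getElem p i (by omega)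
  have htailget : ∀ i (h : i < n), p.support.tail[i]'(by omega) = p.getVert (i + 1) := by
    intro i h
    rw [List.getElem_tail, hgetElem (i + 1) (by omega)]
  have hinj : ∀ i j, i < n → j < n → f i = f j → i = j := by
    intro i j hi hj hij
    rw [hfval i hi, hfval j hj] at hij
    have key : ∀ i j, i ≤ n → j ≤ n → 0 < i → 0 < j →
        p.getVert i = p.getVert j → i = j := by
      intro i j hi hj hi0 hj0 hij
      have h1 : p.support.tail[i - 1]'(by omega) = p.support.tail[j - 1]'(by omega) := by
        rw [htailget _ (by omega), htailget _ (by omega),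
          show i - 1 + 1 = i by omega, show j - 1 + 1 = j by omega, hij]
      have := List.Nodup.getElem_inj_iff htailnd |>.mp h1
      omega
    have hlastA : p.getVert 0 = p.getVert n := by rw [p.getVert_zero, hgva]
    rcases Nat.eq_zero_or_pos i with h0i | h0i <;> rcases Nat.eq_zero_or_pos j with h0j | h0j
    · omega
    · exfalso
      subst h0i
      rw [hlastA] at hij
      have := key n j (by omega) (by omega) (by omega) h0j hij
      omega
    · exfalso
      subst h0j
      rw [hlastA] at hij
      have := key i n (by omega) (by omega) h0i (by omega) hij
      omega
    · exact key i j (by omega) (by omega) h0i h0j hij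
  have hsurj : ∀ v, ∃ k, k < n ∧ f k = v := by
    intro v
    have hv := hp.mem_support v
    rw [SimpleGraph.Walk.mem_support_iff_exists_getVert] at hv
    obtain ⟨k, hk1, hk2⟩ := hv
    rw [hplen] at hk2
    rcases eq_or_lt_of_le hk2 with h | h
    · refine ⟨0, by omega, ?_⟩
      rw [hfval 0 (by omega), p.getVert_zero, ← hgva, ← h, hk1]
    · exact ⟨k, h, by rw [hfval k h, hk1]⟩
  have hgood : GoodEnum H n f := ⟨hadj, hper, hinj, hsurj⟩
  -- bound every edist
  have hmain : ∀ u v : V, H.edist u v ≤ ((n / 2 - 1 : ℕ) : ℕ∞) := by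
    intro u v
    obtain ⟨i, hi, hfi⟩ := hsurj u
    obtain ⟨j, hj, hfj⟩ := hsurj v
    have hgshift := goodEnum_shift hn0 hgood i
    set g : ℕ → V := fun k => f (i + k) with hgdef
    have hg0 : g 0 = u := by rw [hgdef]; simp only; rw [Nat.add_zero, hfi]
    obtain ⟨t0, ht0, hgt0⟩ := hgshift.2.2.2 v
    by_cases hle : t0 ≤ n / 2
    · rw [← hg0, ← hgt0]
      exact stmt13_key H hδ n hn hgshift t0 hle
    · have hgrev := goodEnum_rev (by omega) hgshift
      set g' : ℕ → V := fun k => g ((n - k % n) % n) with hg'def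
      have hg'0 : g' 0 = u := by
        rw [hg'def]; simp only [Nat.zero_mod, Nat.sub_zero, Nat.mod_self]
        rw [← hg0]
      have hval : g' (n - t0) = v := by
        rw [hg'def]; simp only
        rw [Nat.mod_eq_of_lt (show n - t0 < n by omega),
          show n - (n - t0) = t0 by omega, Nat.mod_eq_of_lt ht0, hgt0]
      rw [← hg'0, ← hval]
      exact stmt13_key H hδ n hn hgrev (n - t0) (by omega)
  have hed : H.ediam ≤ ((n / 2 - 1 : ℕ) : ℕ∞) :=
    SimpleGraph.ediam_le_of_edist_le fun u v => hmain u v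
  have := ENat.toNat_le_toNat hed (by simp)
  rw [ENat.toNat_coe] at this
  exact this
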